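/- For all real t > 0 and all real v, |(e^{t+iv} - 1)/(t+iv)|² ≤ ((e^t - 1)/t)² · (t²/(t² + v²)) · (1 + 4e^t/(e^t - 1)²). -/

import Mathlib

open Complex Real

theorem modulus_sq_bound_two (t v : ℝ) (ht : 0 < t) :
    ‖(Complex.exp (t + v * Complex.I) - 1) / (t + v * Complex.I)‖ ^ 2
      ≤ ((Real.exp t - 1) / t) ^ 2 * (t ^ 2 / (t ^ 2 + v ^ 2)) *
        (1 + 4 * Real.exp t / (Real.exp t - 1) ^ 2) := by
  have het : 1 < Real.exp t := by
    have := Real.exp_lt_exp.mpr ht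
    simpa using this
  have hA : ‖Complex.exp (t + v * Complex.I) - 1‖ ≤ Real.exp t + 1 := by
    calc ‖Complex.exp (t + v * Complex.I) - 1‖
        ≤ ‖Complex.exp (t + v * Complex.I)‖ + ‖(1 : ℂ)‖ :=
          norm_sub_le _ _
      _ = Real.exp t + 1 := by
          rw [Complex.norm_exp]
          simp
  have hden : ‖(t : ℂ) + v * Complex.I‖ ^ 2 = t ^ 2 + v ^ 2 := by
    rw [Complex.sq_norm, Complex.normSq_add_mul_I]
  have hpos : 0 < t ^ 2 + v ^ 2 := by positivity
  rw [norm_div, div_pow, hden]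
  have hRHS : ((Real.exp t - 1) / t) ^ 2 * (t ^ 2 / (t ^ 2 + v ^ 2)) *
        (1 + 4 * Real.exp t / (Real.exp t - 1) ^ 2)
      = (Real.exp t + 1) ^ 2 / (t ^ 2 + v ^ 2) := by
    have h1 : Real.exp t - 1 ≠ 0 := by linarith
    have h2 : t ≠ 0 := ne_of_gt ht
    have h3 : t ^ 2 + v ^ 2 ≠ 0 := ne_of_gt hpos
    field_simp
    ring
  rw [hRHS]
  exact div_le_div_of_nonneg_right (pow_le_pow_left₀ (norm_nonneg _) hA 2) hpos.le
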